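/- arXiv:2404.00550 — 2 statements merged into one kernel-verified Lean document; each statement's English description precedes it below -/
import Mathlib

section
/- Let X be a Banach space, (y_n) a sequence with y_n ⇀ y weakly, and (y_n*) norming functionals: ‖y_n*‖ = 1 and y_n*(y_n) = ‖y_n‖ for all n. Suppose y_n* converges weak* to y*. Then for every ε > 0 there exists M such that for all m ≥ M, liminf over n of ‖(y_m − y_n) − y‖ ≥ liminf_n ‖y_n‖ − ε. -/
open Filter

theorem stmt_5 (X : Type*) [NormedAddCommGroup X] [NormedSpace ℝ X] [CompleteSpace X]
    (y : ℕ → X) (y₀ : X)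
    (hweak : ∀ f : X →L[ℝ] ℝ, Tendsto (fun n => f (y n)) atTop (nhds (f y₀)))
    (ystar : ℕ → X →L[ℝ] ℝ) (hnorming : ∀ n, ‖ystar n‖ = 1 ∧ ystar n (y n) = ‖y n‖)
    (g : X →L[ℝ] ℝ)
    (hwstar : ∀ x : X, Tendsto (fun n => ystar n x) atTop (nhds (g x))) :
    ∀ ε > (0:ℝ), ∃ M : ℕ, ∀ m ≥ M,
      liminf (fun n => ‖y n‖) atTop - ε ≤
        liminf (fun n => ‖(y m - y n) - y₀‖) atTop := by
  -- Step 1: the weakly convergent sequence is bounded (Banach–Steinhaus via double dual).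
  obtain ⟨C, hC⟩ : ∃ C, ∀ n, ‖NormedSpace.inclusionInDoubleDual ℝ X (y n)‖ ≤ C := by
    apply banach_steinhaus
    intro f
    have h1 : Tendsto (fun n => ‖f (y n)‖) atTop (nhds ‖f y₀‖) := (hweak f).norm
    obtain ⟨b, hb⟩ := h1.bddAbove_range
    exact ⟨b, fun n => by
      simpa [NormedSpace.dual_def] using hb (Set.mem_range_self n)⟩
  have hCy : ∀ n, ‖y n‖ ≤ C := by
    intro n
    have := (NormedSpace.inclusionInDoubleDualLi ℝ (E := X)).norm_map (y n)
    rw [← this]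
    exact hC n
  intro ε hε
  -- Step 2: g (y m - y₀) → 0, choose M
  have hg : Tendsto (fun m => g (y m - y₀)) atTop (nhds 0) := by
    have := (hweak g).sub_const (g y₀)
    simpa [map_sub] using this
  have : ∀ᶠ m in atTop, g (y m - y₀) < ε :=
    hg.eventually_lt_const hε
  obtain ⟨M, hM⟩ := eventually_atTop.1 this
  refine ⟨M, fun m hm => ?_⟩
  have hgm : g (y m - y₀) < ε := hM m hm
  -- Step 3: eventually in n, ‖y n‖ ≤ ‖(y m - y n) - y₀‖ + ε
  have hev : ∀ᶠ n in atTop, ‖y n‖ ≤ ‖(y m - y n) - y₀‖ + ε := by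
    have h2 : Tendsto (fun n => ystar n (y m - y₀)) atTop (nhds (g (y m - y₀))) :=
      hwstar _
    filter_upwards [h2.eventually_lt_const hgm] with n hn
    have key : ystar n ((y n - y m) + y₀) ≤ ‖(y m - y n) - y₀‖ := by
      calc ystar n ((y n - y m) + y₀) ≤ ‖ystar n ((y n - y m) + y₀)‖ := le_abs_self _
        _ ≤ ‖ystar n‖ * ‖(y n - y m) + y₀‖ := (ystar n).le_opNorm _
        _ = ‖(y n - y m) + y₀‖ := by rw [(hnorming n).1, one_mul]
        _ = ‖(y m - y n) - y₀‖ := by rw [← norm_neg]; congr 1; abel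
    have hval : ystar n ((y n - y m) + y₀) = ‖y n‖ - ystar n (y m - y₀) := by
      have : (y n - y m) + y₀ = y n - (y m - y₀) := by abel
      rw [this, map_sub, (hnorming n).2]
    rw [hval] at key
    linarith
  -- Step 4: pass to liminfs
  have hbdd : IsBoundedUnder (· ≥ ·) atTop (fun n => ‖(y m - y n) - y₀‖) :=
    isBoundedUnder_of ⟨0, fun n => norm_nonneg _⟩
  have hcob : IsCoboundedUnder (· ≥ ·) atTop (fun n => ‖(y m - y n) - y₀‖) := by
    apply Filter.IsBoundedUnder.isCoboundedUnder_ge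
    refine isBoundedUnder_of ⟨‖y m‖ + C + ‖y₀‖, fun n => ?_⟩
    calc ‖(y m - y n) - y₀‖ ≤ ‖y m - y n‖ + ‖y₀‖ := norm_sub_le _ _
      _ ≤ (‖y m‖ + ‖y n‖) + ‖y₀‖ := by linarith [norm_sub_le (y m) (y n)]
      _ ≤ ‖y m‖ + C + ‖y₀‖ := by linarith [hCy n]
  have hcob' : IsCoboundedUnder (· ≥ ·) atTop (fun n => ‖(y m - y n) - y₀‖ + ε) := by
    apply Filter.IsBoundedUnder.isCoboundedUnder_ge
    refine isBoundedUnder_of ⟨‖y m‖ + C + ‖y₀‖ + ε, fun n => ?_⟩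
    have h1 : ‖(y m - y n) - y₀‖ ≤ ‖y m - y n‖ + ‖y₀‖ := norm_sub_le _ _
    have h2 : ‖y m - y n‖ ≤ ‖y m‖ + ‖y n‖ := norm_sub_le _ _
    have h3 := hCy n
    linarith
  have hbdd' : IsBoundedUnder (· ≥ ·) atTop (fun n => ‖y n‖) :=
    isBoundedUnder_of ⟨0, fun n => norm_nonneg _⟩
  have step : liminf (fun n => ‖y n‖) atTop
      ≤ liminf (fun n => ‖(y m - y n) - y₀‖ + ε) atTop :=
    liminf_le_liminf hev hbdd' hcob'
  have eqadd : liminf (fun n => ‖(y m - y n) - y₀‖ + ε) atTop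
      = liminf (fun n => ‖(y m - y n) - y₀‖) atTop + ε :=
    liminf_add_const atTop _ ε hcob hbdd
  rw [eqadd] at step
  linarith
end

section
/- If X is a Banach space whose closed dual unit ball is weak*-sequentially compact, and for every ε > 0 there exists a sequence (y_n) in X with y_n ⇀ y weakly, ‖y‖ ≤ 1/2, ‖y_n‖ > 1 − ε for all n, and ‖y_m − y_n‖ ≤ 1/2 + ε for all large m, n, then J(X) = 2. -/
open Filter

set_option maxHeartbeats 1000000

theorem stmt_17 (X : Type*) [NormedAddCommGroup X] [NormedSpace ℝ X] [CompleteSpace X]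
    (hwsc : ∀ f : ℕ → (X →L[ℝ] ℝ), (∀ n, ‖f n‖ ≤ 1) →
      ∃ (φ : ℕ → ℕ) (g : X →L[ℝ] ℝ), StrictMono φ ∧ ‖g‖ ≤ 1 ∧
        ∀ x : X, Tendsto (fun n => f (φ n) x) atTop (nhds (g x)))
    (h : ∀ ε > (0:ℝ), ∃ (y : ℕ → X) (y₀ : X),
      (∀ f : X →L[ℝ] ℝ, Tendsto (fun n => f (y n)) atTop (nhds (f y₀))) ∧
      ‖y₀‖ ≤ 1/2 ∧ (∀ n, 1 - ε < ‖y n‖) ∧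
      ∃ N : ℕ, ∀ m ≥ N, ∀ n ≥ N, ‖y m - y n‖ ≤ 1/2 + ε) :
    sSup {r : ℝ | ∃ x y : X, ‖x‖ ≤ 1 ∧ ‖y‖ ≤ 1 ∧ r = min ‖x + y‖ ‖x - y‖} = 2 := by
  set S := {r : ℝ | ∃ x y : X, ‖x‖ ≤ 1 ∧ ‖y‖ ≤ 1 ∧ r = min ‖x + y‖ ‖x - y‖} with hSdef
  have hS2 : ∀ r ∈ S, r ≤ 2 := by
    rintro r ⟨x, y, hx, hy, rfl⟩
    have h1 := norm_add_le x y
    calc min ‖x + y‖ ‖x - y‖ ≤ ‖x + y‖ := min_le_left _ _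
      _ ≤ 2 := by linarith
  have h0S : (0:ℝ) ∈ S := ⟨0, 0, by simp⟩
  have hbdd : BddAbove S := ⟨2, fun r hr => hS2 r hr⟩
  have key : ∀ ε : ℝ, 0 < ε → ε ≤ 1/100 → ∃ r ∈ S, 2 - 12*ε ≤ r := by
    intro ε hε hε100
    obtain ⟨y, y₀, hw, hy₀, hys, N, hN⟩ := h ε hε
    have hne : ∀ j, y j ≠ 0 := by
      intro j hj
      have h1 := hys j
      rw [hj, norm_zero] at h1
      linarith
    choose f hf1 hfy using fun j => exists_dual_vector ℝ (y j) (norm_ne_zero_iff.mpr (hne j))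
    have hfy' : ∀ j, f j (y j) = ‖y j‖ := fun j => by exact_mod_cast hfy j
    -- |f j v| ≤ ‖v‖
    have habs : ∀ j (v : X), |f j v| ≤ ‖v‖ := by
      intro j v
      have h1 := (f j).le_opNorm v
      rw [hf1 j, one_mul, Real.norm_eq_abs] at h1
      exact h1
    have hop : ∀ j (v : X), f j v ≤ ‖v‖ := fun j v => (le_abs_self _).trans (habs j v)
    have hAB : ∀ j, N ≤ j → ∀ m, N ≤ m → 1/2 - 2*ε ≤ f j (y m) := by
      intro j hj m hm
      have h1 : f j (y j - y m) ≤ ‖y j - y m‖ := hop j _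
      have h2 := hN j hj m hm
      have h3 := hys j
      have h4 : f j (y j - y m) = f j (y j) - f j (y m) := map_sub _ _ _
      have h5 := hfy' j
      linarith
    have hA : ∀ j, N ≤ j → 1/2 - 2*ε ≤ f j y₀ := by
      intro j hj
      refine ge_of_tendsto (hw (f j)) ?_
      filter_upwards [eventually_ge_atTop N] with m hm
      exact hAB j hj m hm
    obtain ⟨φ, g, hφ, hg1, hgc⟩ := hwsc f (fun j => le_of_eq (hf1 j))
    have hgabs : ∀ v : X, |g v| ≤ ‖v‖ := by
      intro v
      have h1 := g.le_opNorm v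
      rw [Real.norm_eq_abs] at h1
      nlinarith [norm_nonneg v, abs_nonneg (g v)]
    have hB : ∀ j, N ≤ j → 1/2 - 2*ε ≤ g (y j) := by
      intro j hj
      refine ge_of_tendsto (hgc (y j)) ?_
      filter_upwards [eventually_ge_atTop N] with k hk
      exact hAB (φ k) (hk.trans (hφ.le_apply)) j hj
    have hgy₀u : g y₀ ≤ 1/2 := ((le_abs_self _).trans (hgabs y₀)).trans hy₀
    -- choose n ≥ N with g (y n) ≤ g y₀ + ε
    obtain ⟨K, hK⟩ := Metric.tendsto_atTop.mp (hw g) ε hε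
    set n := max N K with hndef
    have hn : N ≤ n := le_max_left _ _
    have hgn : g (y n) ≤ g y₀ + ε := by
      have h1 := hK n (le_max_right _ _)
      rw [Real.dist_eq] at h1
      have := abs_lt.mp h1
      linarith [this.1, this.2]
    -- choose k large
    have c1 : ∀ᶠ k in atTop, N ≤ φ k :=
      (eventually_ge_atTop N).mono fun k hk => hk.trans hφ.le_apply
    have c2 : Tendsto (fun k => f n (y (φ k))) atTop (nhds (f n y₀)) :=
      (hw (f n)).comp hφ.tendsto_atTop
    obtain ⟨K2, hK2⟩ := Metric.tendsto_atTop.mp c2 ε hε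
    obtain ⟨K3, hK3⟩ := Metric.tendsto_atTop.mp (hgc (y n)) ε hε
    obtain ⟨k, hk1, hk2, hk3⟩ :
        ∃ k, N ≤ φ k ∧ dist (f n (y (φ k))) (f n y₀) < ε ∧
          dist (f (φ k) (y n)) (g (y n)) < ε := by
      obtain ⟨k, hka, hkb⟩ := (c1.and (eventually_ge_atTop (max K2 K3))).exists
      exact ⟨k, hka, hK2 k (le_trans (le_max_left _ _) hkb),
        hK3 k (le_trans (le_max_right _ _) hkb)⟩
    set m := φ k with hmdef
    have hfnym : f n (y m) ≤ 1/2 + ε := by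
      rw [Real.dist_eq] at hk2
      have h1 := (abs_lt.mp hk2).2
      have h2 : f n y₀ ≤ 1/2 := (hop n y₀).trans hy₀
      linarith
    have hfmyn : f m (y n) ≤ 1/2 + 2*ε := by
      rw [Real.dist_eq] at hk3
      have h1 := (abs_lt.mp hk3).2
      linarith
    -- the pair
    set s : ℝ := 2/(1+2*ε) with hsdef
    have hden : (0:ℝ) < 1 + 2*ε := by linarith
    have hs0 : 0 ≤ s := by positivity
    have hsl : 2 - 4*ε ≤ s := by
      rw [hsdef, le_div_iff₀ hden]
      nlinarith
    set x : X := (2:ℝ) • y₀ with hxdef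
    set z : X := s • (y n - y m) with hzdef
    have hx1 : ‖x‖ ≤ 1 := by
      rw [hxdef, norm_smul, Real.norm_ofNat]
      linarith
    have hz1 : ‖z‖ ≤ 1 := by
      rw [hzdef, norm_smul, Real.norm_eq_abs, abs_of_nonneg hs0]
      have h1 := hN n hn m hk1
      have h2 : s * (1/2 + ε) = 1 := by
        rw [hsdef]; field_simp
      nlinarith [norm_nonneg (y n - y m)]
    have hside1 : 2 - 12*ε ≤ ‖x + z‖ := by
      have hexp : f n (x + z) = 2 * f n y₀ + s * (f n (y n) - f n (y m)) := by
        simp only [hxdef, hzdef, map_add, map_smul, map_sub, smul_eq_mul]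
        try ring
      have hd : 1/2 - 2*ε ≤ f n (y n) - f n (y m) := by
        have h1 := hys n
        have h2 := hfy' n
        linarith
      have hd0 : (0:ℝ) ≤ 1/2 - 2*ε := by linarith
      have hmul : (2 - 4*ε) * (1/2 - 2*ε) ≤ s * (f n (y n) - f n (y m)) :=
        mul_le_mul hsl hd hd0 hs0
      have hfn0 := hA n hn
      have h1 : f n (x + z) ≤ ‖x + z‖ := hop n _
      nlinarith
    have hside2 : 2 - 12*ε ≤ ‖x - z‖ := by
      have hexp : f m (x - z) = 2 * f m y₀ + s * (f m (y m) - f m (y n)) := by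
        simp only [hxdef, hzdef, map_add, map_sub, map_smul, smul_eq_mul]
        try ring
      have hd : 1/2 - 3*ε ≤ f m (y m) - f m (y n) := by
        have h1 := hys m
        have h2 := hfy' m
        linarith
      have hd0 : (0:ℝ) ≤ 1/2 - 3*ε := by linarith
      have hmul : (2 - 4*ε) * (1/2 - 3*ε) ≤ s * (f m (y m) - f m (y n)) :=
        mul_le_mul hsl hd hd0 hs0
      have hfm0 := hA m hk1
      have h1 : f m (x - z) ≤ ‖x - z‖ := hop m _
      nlinarith
    exact ⟨min ‖x + z‖ ‖x - z‖, ⟨x, z, hx1, hz1, rfl⟩, le_min hside1 hside2⟩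
  apply le_antisymm
  · exact csSup_le ⟨0, h0S⟩ hS2
  · by_contra hc
    push_neg at hc
    set ε : ℝ := min ((2 - sSup S)/13) (1/100) with hεdef
    have hε : 0 < ε := lt_min (by linarith) (by norm_num)
    obtain ⟨r, hrS, hr⟩ := key ε hε (min_le_right _ _)
    have h1 : r ≤ sSup S := le_csSup hbdd hrS
    have h2 : ε ≤ (2 - sSup S)/13 := min_le_left _ _
    linarith
end
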